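/- Let a₁,…,a_k ∈ [n] with n ∈ {a₁,…,a_k}, and let 𝓑₁,…,𝓑_t be the induced blocks with n ∈ 𝓑_t. Then for uniformly random (ω,τ) ∈ 𝔖_{n,r}: E[X_{a₁}⋯X_{a_k}] = ((r-1)/r)^{|𝓑_t|} · ∏_{i=1}^t 1/|𝓑_i|!. -/

import Mathlib

open scoped Classical BigOperators

namespace ColoredPerm

/-- A colored permutation: a pair of a permutation of `Fin n` and a coloring. -/
abbrev CP (n r : ℕ) := Equiv.Perm (Fin n) × (Fin n → ZMod r)

/-- Index `i : Fin n` represents position `i+1 ∈ [n]`.  Descent at position `i+1`. -/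
def IsDescent {n r : ℕ} (σ : CP n r) (i : Fin n) : Prop :=
  if h : (i : ℕ) + 1 < n then
    (σ.2 ⟨(i : ℕ) + 1, h⟩).val < (σ.2 i).val ∨
      (σ.2 i = σ.2 ⟨(i : ℕ) + 1, h⟩ ∧ σ.1 ⟨(i : ℕ) + 1, h⟩ < σ.1 i)
  else (σ.2 i).val ≠ 0

/-- Descent indicator. -/
noncomputable def X {n r : ℕ} (i : Fin n) (σ : CP n r) : ℚ :=
  if IsDescent σ i then 1 else 0

/-- Color indicator `Y_{i,c}`. -/
noncomputable def Y {n r : ℕ} (i : Fin n) (c : ZMod r) (σ : CP n r) : ℚ :=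
  if σ.2 i = c then 1 else 0

noncomputable def des {n r : ℕ} (σ : CP n r) : ℕ :=
  (Finset.univ.filter (fun i => IsDescent σ i)).card

/-- Major index: sum of descent positions lying in `[n-1]`. -/
noncomputable def maj {n r : ℕ} (σ : CP n r) : ℕ :=
  ∑ i ∈ Finset.univ.filter (fun i : Fin n => IsDescent σ i ∧ (i : ℕ) + 1 < n),
    ((i : ℕ) + 1)

def col {n r : ℕ} (σ : CP n r) : ℕ := ∑ i, (σ.2 i).val

noncomputable def fmaj {n r : ℕ} (σ : CP n r) : ℕ := r * maj σ + col σ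

/-- Ordinary descent of a permutation of `Fin n` at position `i+1` (no descent at last position). -/
def IsDescentS {n : ℕ} (w : Equiv.Perm (Fin n)) (i : Fin n) : Prop :=
  if h : (i : ℕ) + 1 < n then w ⟨(i : ℕ) + 1, h⟩ < w i else False

noncomputable def XS {n : ℕ} (i : Fin n) (w : Equiv.Perm (Fin n)) : ℚ :=
  if IsDescentS w i then 1 else 0

noncomputable def majS {n : ℕ} (w : Equiv.Perm (Fin n)) : ℕ :=
  ∑ i ∈ Finset.univ.filter (fun i : Fin n => IsDescentS w i ∧ (i : ℕ) + 1 < n),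
    ((i : ℕ) + 1)

/-- Expectation of `f` under the uniform distribution on a finite set `S`. -/
noncomputable def E {α : Type*} (S : Finset α) (f : α → ℚ) : ℚ :=
  (∑ x ∈ S, f x) / S.card

/-- Group multiplication of the wreath product `ℤ_r ≀ 𝔖_n`. -/
def cmul {n r : ℕ} (x y : CP n r) : CP n r :=
  (x.1 * y.1, fun i => x.2 (y.1 i) + y.2 i)

/-- Inverse in the wreath product. -/
def cinv {n r : ℕ} (x : CP n r) : CP n r :=
  (x.1⁻¹, fun i => - x.2 (x.1⁻¹ i))

/-- Conjugacy in the colored permutation group. -/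
def IsConjCP {n r : ℕ} (x y : CP n r) : Prop :=
  ∃ g : CP n r, cmul (cmul g x) (cinv g) = y

/-- The elements in the same cycle of `σ` as `i`. -/
noncomputable def cycleSet {n r : ℕ} (σ : CP n r) (i : Fin n) : Finset (Fin n) :=
  Finset.univ.filter (fun x => σ.1.SameCycle i x)

/-- The number of cycles of `σ` of length `ℓ` whose colors sum to `j`. -/
noncomputable def cycleCount {n r : ℕ} (σ : CP n r) (ℓ : ℕ) (j : ZMod r) : ℕ :=
  (Finset.univ.filter (fun i : Fin n =>
      (cycleSet σ i).card = ℓ ∧ (∑ x ∈ cycleSet σ i, σ.2 x) = j)).card / ℓ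

/-- `σ` has no cycle of length `ℓ`. -/
def NoCycleOfLength {n r : ℕ} (σ : CP n r) (ℓ : ℕ) : Prop :=
  ∀ i : Fin n, (cycleSet σ i).card ≠ ℓ

/-- `C` is a conjugacy class of `𝔖_{n,r}`. -/
def IsConjClass {n r : ℕ} [NeZero r] (C : Finset (CP n r)) : Prop :=
  ∃ σ₀ : CP n r, C = Finset.univ.filter (fun σ => IsConjCP σ₀ σ)

/-- `C` has no cycles of lengths `1, 2, …, m`. -/
def NoShortCycles {n r : ℕ} (C : Finset (CP n r)) (m : ℕ) : Prop :=
  ∀ σ ∈ C, ∀ ℓ, 1 ≤ ℓ → ℓ ≤ m → NoCycleOfLength σ ℓ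

/-- The relation identifying `a_i` with `a_i + 1` (on indices: `a i` with the index of
value `(a i) + 1`, when it exists). -/
def adjRel {n k : ℕ} (a : Fin k → Fin n) (p q : Fin n) : Prop :=
  (∃ i, a i = p) ∧ (q : ℕ) = (p : ℕ) + 1

/-- Being in the same block induced by `a`. -/
def SameBlock {n k : ℕ} (a : Fin k → Fin n) (p q : Fin n) : Prop :=
  Relation.EqvGen (adjRel a) p q

/-- The block containing `p`. -/
noncomputable def blockOf {n k : ℕ} (a : Fin k → Fin n) (p : Fin n) : Finset (Fin n) :=
  Finset.univ.filter (fun q => SameBlock a p q)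

/-- The set of blocks induced by `a`. -/
noncomputable def blocks {n k : ℕ} (a : Fin k → Fin n) : Finset (Finset (Fin n)) :=
  Finset.univ.image (blockOf a)

/-- `∏_i 1/|𝓑_i|!` over the blocks induced by `a`. -/
noncomputable def blockProd {n k : ℕ} (a : Fin k → Fin n) : ℚ :=
  ∏ b ∈ blocks a, (1 : ℚ) / (Nat.factorial b.card)

end ColoredPerm

namespace ColoredPerm

noncomputable def ER {α : Type*} (S : Finset α) (f : α → ℝ) : ℝ :=
  (∑ x ∈ S, f x) / S.card

noncomputable def XR {n r : ℕ} (i : Fin n) (σ : CP n r) : ℝ :=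
  if IsDescent σ i then 1 else 0

noncomputable def XSR {n : ℕ} (i : Fin n) (w : Equiv.Perm (Fin n)) : ℝ :=
  if IsDescentS w i then 1 else 0

end ColoredPerm

set_option linter.unusedSectionVars false
open ColoredPerm Equiv Finset

variable {n r k : ℕ} [NeZero r]

/-- The key of position `q` under `σ`: lexicographic (color, value) encoded in ℕ. -/
def ckey (σ : CP n r) (q : Fin n) : ℕ := (σ.2 q).val * n + (σ.1 q).val

lemma ckey_injective (σ : CP n r) {p q : Fin n} (h : p ≠ q) : ckey σ p ≠ ckey σ q := by
  intro he
  have hw : (σ.1 p) ≠ σ.1 q := fun hh => h (σ.1.injective hh)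
  have h1 : (σ.1 p).val < n := (σ.1 p).isLt
  have h2 : (σ.1 q).val < n := (σ.1 q).isLt
  unfold ckey at he
  have : (σ.1 p).val = (σ.1 q).val := by
    rcases Nat.lt_trichotomy (σ.2 p).val (σ.2 q).val with hc | hc | hc
    · nlinarith
    · rw [hc] at he; omega
    · nlinarith
  exact hw (Fin.ext this)

lemma descent_iff_key {σ : CP n r} {p : Fin n} (hp : (p : ℕ) + 1 < n) :
    IsDescent σ p ↔ ckey σ ⟨(p : ℕ) + 1, hp⟩ < ckey σ p := by
  unfold IsDescent
  rw [dif_pos hp]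
  set q : Fin n := ⟨(p : ℕ) + 1, hp⟩
  have h1 : (σ.1 p).val < n := (σ.1 p).isLt
  have h2 : (σ.1 q).val < n := (σ.1 q).isLt
  unfold ckey
  constructor
  · rintro (hc | ⟨hc, hw⟩)
    · nlinarith
    · rw [hc]
      have : (σ.1 q).val < (σ.1 p).val := hw
      omega
  · intro hk
    rcases Nat.lt_trichotomy (σ.2 q).val (σ.2 p).val with hc | hc | hc
    · exact Or.inl hc
    · refine Or.inr ⟨ZMod.val_injective r hc.symm, ?_⟩
      show (σ.1 q).val < (σ.1 p).val
      rw [hc] at hk; omega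
    · exfalso; nlinarith

lemma descent_last {σ : CP n r} {p : Fin n} (hp : (p : ℕ) + 1 = n) :
    IsDescent σ p ↔ (σ.2 p).val ≠ 0 := by
  unfold IsDescent
  rw [dif_neg (by omega)]

/-- Forward characterization: positions strictly between same-block elements are in `D`. -/
lemma sameBlock_interval {a : Fin k → Fin n} {p q : Fin n} (h : SameBlock a p q) :
    ∀ s : ℕ, min (p : ℕ) (q : ℕ) ≤ s → s < max (p : ℕ) (q : ℕ) → ∃ i, (a i : ℕ) = s := by
  induction h with
  | rel p q hpq =>
      intro s hs1 hs2
      obtain ⟨⟨i, hi⟩, hq⟩ := hpq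
      exact ⟨i, by rw [hi]; omega⟩
  | refl p => intro s hs1 hs2; omega
  | symm p q _ ih => intro s hs1 hs2; exact ih s (by omega) (by omega)
  | trans p q u _ _ ih1 ih2 =>
      intro s hs1 hs2
      by_cases hc : min (p : ℕ) (q : ℕ) ≤ s ∧ s < max (p : ℕ) (q : ℕ)
      · exact ih1 s hc.1 hc.2
      · exact ih2 s (by omega) (by omega)

lemma sameBlock_mem {a : Fin k → Fin n} {p q : Fin n} (h : SameBlock a p q) :
    q ∈ blockOf a p := by
  simp [blockOf, h]

lemma mem_blockOf_iff {a : Fin k → Fin n} {p q : Fin n} :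
    q ∈ blockOf a p ↔ SameBlock a p q := by simp [blockOf]

lemma sameBlock_refl (a : Fin k → Fin n) (p : Fin n) : SameBlock a p p :=
  Relation.EqvGen.refl p

lemma sameBlock_symm {a : Fin k → Fin n} {p q : Fin n} (h : SameBlock a p q) :
    SameBlock a q p := Relation.EqvGen.symm _ _ h

lemma sameBlock_trans {a : Fin k → Fin n} {p q u : Fin n} (h1 : SameBlock a p q)
    (h2 : SameBlock a q u) : SameBlock a p u := Relation.EqvGen.trans _ _ _ h1 h2

lemma blockOf_eq_of_sameBlock {a : Fin k → Fin n} {p q : Fin n} (h : SameBlock a p q) :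
    blockOf a p = blockOf a q := by
  ext u
  simp only [mem_blockOf_iff]
  exact ⟨fun hu => sameBlock_trans (sameBlock_symm h) hu, fun hu => sameBlock_trans h hu⟩

lemma sameBlock_of_blockOf_eq {a : Fin k → Fin n} {p q : Fin n} (h : blockOf a p = blockOf a q) :
    SameBlock a p q := by
  have : q ∈ blockOf a p := h ▸ sameBlock_mem (sameBlock_refl a q)
  exact mem_blockOf_iff.mp this

/-- Single-step key decrease for a good colored permutation. -/
lemma key_step {a : Fin k → Fin n} {σ : CP n r} (hG : ∀ i, IsDescent σ (a i))
    {p : Fin n} (hD : ∃ i, (a i : ℕ) = (p : ℕ)) (hp : (p : ℕ) + 1 < n) :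
    ckey σ ⟨(p : ℕ) + 1, hp⟩ < ckey σ p := by
  obtain ⟨i, hi⟩ := hD
  have hai : a i = p := Fin.ext hi
  have := hG i
  rw [hai] at this
  exact (descent_iff_key hp).mp this

/-- Chain of key decreases along a `D`-interval. -/
lemma key_chain {a : Fin k → Fin n} {σ : CP n r} (hG : ∀ i, IsDescent σ (a i)) :
    ∀ d : ℕ, ∀ p q : Fin n, (q : ℕ) = (p : ℕ) + d + 1 →
      (∀ s : ℕ, (p : ℕ) ≤ s → s < (q : ℕ) → ∃ i, (a i : ℕ) = s) →
      ckey σ q < ckey σ p := by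
  intro d
  induction d with
  | zero =>
      intro p q hq hint
      have hp : (p : ℕ) + 1 < n := by omega
      have : q = ⟨(p : ℕ) + 1, hp⟩ := Fin.ext (by simp [hq])
      rw [this]
      exact key_step hG (hint p le_rfl (by omega)) hp
  | succ d ih =>
      intro p q hq hint
      have hp : (p : ℕ) + 1 < n := by have := q.isLt; omega
      set p' : Fin n := ⟨(p : ℕ) + 1, hp⟩ with hp'
      have h1 : ckey σ p' < ckey σ p := key_step hG (hint p le_rfl (by omega)) hp
      have h2 : ckey σ q < ckey σ p' := by
        apply ih p' q (by simp [hp']; omega)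
        intro s hs1 hs2
        exact hint s (by simp [hp'] at hs1 ⊢; omega) hs2
      omega

/-- Keys strictly decrease within a block, for good elements. -/
lemma key_lt_of_sameBlock {a : Fin k → Fin n} {σ : CP n r} (hG : ∀ i, IsDescent σ (a i))
    {p q : Fin n} (hb : SameBlock a p q) (hlt : p < q) : ckey σ q < ckey σ p := by
  have hlt' : (p : ℕ) < (q : ℕ) := hlt
  apply key_chain hG ((q : ℕ) - (p : ℕ) - 1) p q (by omega)
  intro s hs1 hs2
  exact sameBlock_interval hb s (by omega) (by omega)
/-- Good elements have nonzero colors on the block of `n-1`. -/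
lemma good_nonzero (hn : 0 < n) {a : Fin k → Fin n} (hmem : ∃ i, (a i : ℕ) + 1 = n)
    {σ : CP n r} (hG : ∀ i, IsDescent σ (a i)) {q : Fin n}
    (hq : q ∈ blockOf a ⟨n - 1, Nat.sub_lt hn one_pos⟩) : (σ.2 q).val ≠ 0 := by
  set pn : Fin n := ⟨n - 1, Nat.sub_lt hn one_pos⟩ with hpn
  obtain ⟨i, hi⟩ := hmem
  have hai : a i = pn := Fin.ext (by simp [hpn]; omega)
  have hlast : (σ.2 pn).val ≠ 0 := by
    have := hG i
    rw [hai] at this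
    exact (descent_last (by simp [hpn]; omega)).mp this
  have hb : SameBlock a pn q := mem_blockOf_iff.mp hq
  by_cases hqe : q = pn
  · rw [hqe]; exact hlast
  · have hlt : q < pn := by
      have h1 : (q : ℕ) < n := q.isLt
      have h2 : (q : ℕ) ≠ n - 1 := fun hc => hqe (Fin.ext (by simp [hpn, hc]))
      show (q : ℕ) < (pn : ℕ)
      simp [hpn]; omega
    have hk : ckey σ pn < ckey σ q := key_lt_of_sameBlock hG (sameBlock_symm hb) hlt
    have h3 : n ≤ (σ.2 pn).val * n := Nat.le_mul_of_pos_left n (by omega)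
    have h4 : (σ.1 q).val < n := (σ.1 q).isLt
    unfold ckey at hk
    intro hc
    rw [hc] at hk
    omega

/-- A strictly monotone self-map of a finite set is the identity. -/
lemma strictMonoOn_finset_id :
    ∀ S : Finset (Fin n), ∀ f : Fin n → Fin n, (∀ q ∈ S, f q ∈ S) →
      (∀ p ∈ S, ∀ q ∈ S, p < q → f p < f q) → ∀ q ∈ S, f q = q := by
  intro S
  induction S using Finset.strongInduction with
  | _ S ih =>
    intro f hmaps hmono q hq
    have hne : S.Nonempty := ⟨q, hq⟩
    set m := S.min' hne with hm
    have hinj : ∀ p ∈ S, ∀ p' ∈ S, f p = f p' → p = p' := by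
      intro p hp p' hp' he
      rcases lt_trichotomy p p' with h | h | h
      · exact absurd he (ne_of_lt (hmono p hp p' hp' h))
      · exact h
      · exact absurd he.symm (ne_of_lt (hmono p' hp' p hp h))
    have him : S.image f = S := by
      apply Finset.eq_of_subset_of_card_le
      · intro x hx
        obtain ⟨y, hy, rfl⟩ := Finset.mem_image.mp hx
        exact hmaps y hy
      · rw [Finset.card_image_of_injOn (fun x hx y hy => hinj x hx y hy)]
    have hfm : f m = m := by
      have h1 : f m ∈ S := hmaps m (S.min'_mem hne)
      have h2 : m ≤ f m := S.min'_le _ h1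
      rcases eq_or_lt_of_le h2 with h | h
      · exact h.symm
      · exfalso
        have : m ∈ S.image f := by rw [him]; exact S.min'_mem hne
        obtain ⟨p, hp, hfp⟩ := Finset.mem_image.mp this
        have hmp : m ≤ p := S.min'_le _ hp
        rcases eq_or_lt_of_le hmp with h' | h'
        · rw [← h'] at hfp; rw [hfp] at h; exact lt_irrefl _ h
        · have := hmono m (S.min'_mem hne) p hp h'
          rw [hfp] at this
          exact absurd (this.trans h) (lt_irrefl _)
    by_cases hqm : q = m
    · rw [hqm]; exact hfm
    · have hq' : q ∈ S.erase m := Finset.mem_erase.mpr ⟨hqm, hq⟩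
      refine ih (S.erase m) (Finset.erase_ssubset (S.min'_mem hne)) f ?_ ?_ q hq'
      · intro p hp
        have hpS : p ∈ S := Finset.mem_of_mem_erase hp
        refine Finset.mem_erase.mpr ⟨?_, hmaps p hpS⟩
        intro hc
        have : p = m := hinj p hpS m (S.min'_mem hne) (hc.trans hfm.symm)
        exact (Finset.mem_erase.mp hp).1 this
      · intro p hp p' hp' hlt
        exact hmono p (Finset.mem_of_mem_erase hp) p' (Finset.mem_of_mem_erase hp') hlt
/-- The sorting map. -/
def phi (σ : CP n r) (g : Equiv.Perm (Fin n)) : CP n r :=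
  (σ.1 * g, fun q => σ.2 (g q))

lemma ckey_phi (σ : CP n r) (g : Equiv.Perm (Fin n)) (q : Fin n) :
    ckey (phi σ g) q = ckey σ (g q) := rfl

/-- A block-preserving permutation relating two good elements is the identity. -/
lemma block_perm_eq_one {a : Fin k → Fin n} {σ : CP n r} (hG : ∀ i, IsDescent σ (a i))
    {h : Equiv.Perm (Fin n)} (hh : ∀ p, SameBlock a p (h p))
    (hG' : ∀ i, IsDescent (phi σ h) (a i)) : h = 1 := by
  have main : ∀ p : Fin n, ∀ q ∈ blockOf a p, h q = q := by
    intro p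
    apply strictMonoOn_finset_id (blockOf a p) h
    · intro q hq
      exact sameBlock_mem (sameBlock_trans (mem_blockOf_iff.mp hq) (hh q))
    · intro p1 hp1 q1 hq1 hlt
      have hb : SameBlock a p1 q1 :=
        sameBlock_trans (sameBlock_symm (mem_blockOf_iff.mp hp1)) (mem_blockOf_iff.mp hq1)
      have hk : ckey σ (h q1) < ckey σ (h p1) := by
        have := key_lt_of_sameBlock hG' hb hlt
        rwa [ckey_phi, ckey_phi] at this
      have hb' : SameBlock a (h p1) (h q1) :=
        sameBlock_trans (sameBlock_symm (hh p1)) (sameBlock_trans hb (hh q1))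
      rcases lt_trichotomy (h p1) (h q1) with hc | hc | hc
      · exact hc
      · exact absurd (congrArg (ckey σ) hc) (ne_of_lt hk).symm
      · exact absurd (key_lt_of_sameBlock hG (sameBlock_symm hb') hc) (by omega)
  ext p
  exact Fin.val_eq_of_eq (main p p (sameBlock_mem (sameBlock_refl a p)))

lemma phi_injective {a : Fin k → Fin n} {σ σ' : CP n r}
    (hG : ∀ i, IsDescent σ (a i)) (hG' : ∀ i, IsDescent σ' (a i))
    {g g' : Equiv.Perm (Fin n)} (hg : ∀ p, SameBlock a p (g p))
    (hg' : ∀ p, SameBlock a p (g' p)) (he : phi σ g = phi σ' g') : σ = σ' ∧ g = g' := by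
  have h1 : σ.1 * g = σ'.1 * g' := congrArg Prod.fst he
  have h2 : ∀ q, σ.2 (g q) = σ'.2 (g' q) := fun q => congrFun (congrArg Prod.snd he) q
  set h : Equiv.Perm (Fin n) := g * g'⁻¹ with hhdef
  have hexp : σ' = phi σ h := by
    refine Prod.ext ?_ ?_
    · show σ'.1 = σ.1 * h
      rw [hhdef, ← mul_assoc, h1, mul_assoc, mul_inv_cancel, mul_one]
    · show σ'.2 = fun q => σ.2 (h q)
      funext q
      have := h2 (g'⁻¹ q)
      simp only [Equiv.Perm.coe_inv, Equiv.apply_symm_apply] at this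
      rw [← this]
      rfl
  have hh : ∀ p, SameBlock a p (h p) := by
    intro p
    have e1 : SameBlock a (g'⁻¹ p) p := by
      have := hg' (g'⁻¹ p)
      rwa [Equiv.Perm.coe_inv, Equiv.apply_symm_apply] at this
    have e2 : SameBlock a (g'⁻¹ p) (g (g'⁻¹ p)) := hg (g'⁻¹ p)
    exact sameBlock_trans (sameBlock_symm e1) e2
  have hone : h = 1 := block_perm_eq_one hG hh (hexp ▸ hG')
  constructor
  · rw [hexp, hone]
    refine Prod.ext ?_ ?_
    · show σ.1 = σ.1 * 1; rw [mul_one]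
    · rfl
  · have : g * g'⁻¹ = 1 := hone
    calc g = g * g'⁻¹ * g' := by rw [mul_assoc, inv_mul_cancel, mul_one]
    _ = g' := by rw [this, one_mul]
lemma sum_pair_lt {f g : Fin n → ℕ} {p p' : Fin n} (hne : p ≠ p')
    (hext : ∀ q, q ≠ p → q ≠ p' → f q = g q) (hpair : f p + f p' < g p + g p') :
    ∑ q, f q < ∑ q, g q := by
  have hp' : p' ∈ Finset.univ.erase p := Finset.mem_erase.mpr ⟨hne.symm, Finset.mem_univ _⟩
  have hsum : ∀ u : Fin n → ℕ,
      ∑ q, u q = ∑ q ∈ (Finset.univ.erase p).erase p', u q + u p' + u p := by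
    intro u
    rw [Finset.sum_erase_add _ _ hp', Finset.sum_erase_add _ _ (Finset.mem_univ p)]
  rw [hsum f, hsum g]
  have heq : ∑ q ∈ (Finset.univ.erase p).erase p', f q
      = ∑ q ∈ (Finset.univ.erase p).erase p', g q := by
    apply Finset.sum_congr rfl
    intro q hq
    have h1 := (Finset.mem_erase.mp hq).1
    have h2 := (Finset.mem_erase.mp (Finset.mem_erase.mp hq).2).1
    exact hext q h2 h1
  omega

noncomputable def statW {n r : ℕ} (υ : CP n r) : ℕ := ∑ q : Fin n, (n - (q : ℕ)) * ckey υ q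

lemma phi_surjective (hn : 0 < n) {a : Fin k → Fin n} (hmem : ∃ i, (a i : ℕ) + 1 = n)
    {τ : CP n r} (hτ : ∀ q ∈ blockOf a ⟨n - 1, Nat.sub_lt hn one_pos⟩, (τ.2 q).val ≠ 0) :
    ∃ σ g, (∀ i, IsDescent σ (a i)) ∧ (∀ p, SameBlock a p (g p)) ∧ phi σ g = τ := by
  set Gf : Finset (Equiv.Perm (Fin n)) :=
    Finset.univ.filter (fun g => ∀ p, SameBlock a p (g p)) with hGf
  have hone : (1 : Equiv.Perm (Fin n)) ∈ Gf := by
    simp only [hGf, Finset.mem_filter, Finset.mem_univ, true_and]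
    intro p
    exact sameBlock_refl a p
  obtain ⟨g, hgG, hgmax⟩ := Gf.exists_max_image (fun g => statW (phi τ g)) ⟨1, hone⟩
  have hg : ∀ p, SameBlock a p (g p) := (Finset.mem_filter.mp hgG).2
  set σ' : CP n r := phi τ g with hσ'
  have hGood : ∀ i, IsDescent σ' (a i) := by
    intro i
    by_contra hnd
    by_cases hlt : (a i : ℕ) + 1 < n
    · -- internal position: swap increases the statistic
      set p : Fin n := a i with hpdef
      set p' : Fin n := ⟨(p : ℕ) + 1, hlt⟩ with hp'def
      have hkey : ckey σ' p < ckey σ' p' := by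
        have hnk : ¬ ckey σ' p' < ckey σ' p := fun hc => hnd ((descent_iff_key hlt).mpr hc)
        have hne : ckey σ' p ≠ ckey σ' p' :=
          ckey_injective σ' (fun hc => by
            have : (p : ℕ) = (p' : ℕ) := congrArg Fin.val hc
            simp [hp'def] at this)
        omega
      have hpne : p ≠ p' := fun hc => by
        have : (p : ℕ) = (p' : ℕ) := congrArg Fin.val hc
        simp [hp'def] at this
      have hsblock : ∀ q, SameBlock a q (Equiv.swap p p' q) := by
        intro q
        by_cases h1 : q = p
        · rw [h1, Equiv.swap_apply_left]
          exact Relation.EqvGen.rel _ _ ⟨⟨i, hpdef.symm⟩, rfl⟩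
        · by_cases h2 : q = p'
          · rw [h2, Equiv.swap_apply_right]
            exact sameBlock_symm (Relation.EqvGen.rel _ _ ⟨⟨i, hpdef.symm⟩, rfl⟩)
          · rw [Equiv.swap_apply_of_ne_of_ne h1 h2]
            exact sameBlock_refl a q
      have hgsG : g * Equiv.swap p p' ∈ Gf := by
        simp only [hGf, Finset.mem_filter, Finset.mem_univ, true_and]
        intro q
        have h3 : (g * Equiv.swap p p') q = g (Equiv.swap p p' q) := rfl
        rw [h3]
        exact sameBlock_trans (hsblock q) (hg (Equiv.swap p p' q))
      have hphi : phi τ (g * Equiv.swap p p') = phi σ' (Equiv.swap p p') := by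
        refine Prod.ext ?_ ?_
        · show τ.1 * (g * Equiv.swap p p') = (τ.1 * g) * Equiv.swap p p'
          rw [mul_assoc]
        · rfl
      have hstat : statW σ' < statW (phi τ (g * Equiv.swap p p')) := by
        rw [hphi]
        unfold statW
        apply sum_pair_lt hpne
        · intro q h1 h2
          simp only [ckey_phi, Equiv.swap_apply_of_ne_of_ne h1 h2]
        · simp only [ckey_phi, Equiv.swap_apply_left, Equiv.swap_apply_right]
          have hw : n - (p : ℕ) = (n - (p' : ℕ)) + 1 := by
            have h4 : (p' : ℕ) = (p : ℕ) + 1 := rfl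
            omega
          rw [hw]
          set A := n - (p' : ℕ)
          set x := ckey σ' p
          set y := ckey σ' p'
          have h5 : (A + 1) * y = A * y + y := by ring
          have h6 : (A + 1) * x = A * x + x := by ring
          omega
      exact absurd (hgmax (g * Equiv.swap p p') hgsG) (not_le.mpr hstat)
    · -- last position
      have hlast : (a i : ℕ) + 1 = n := by have := (a i).isLt; omega
      have h0 : (σ'.2 (a i)).val = 0 := by
        by_contra hc
        exact hnd ((descent_last hlast).mpr hc)
      have hblk : g (a i) ∈ blockOf a ⟨n - 1, Nat.sub_lt hn one_pos⟩ := by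
        have : a i = (⟨n - 1, Nat.sub_lt hn one_pos⟩ : Fin n) := Fin.ext (by simp; omega)
        rw [← this]
        exact sameBlock_mem (hg (a i))
      exact hτ _ hblk h0
  refine ⟨σ', g⁻¹, hGood, ?_, ?_⟩
  · intro p
    have e1 : SameBlock a (g⁻¹ p) p := by
      have := hg (g⁻¹ p)
      rwa [Equiv.Perm.coe_inv, Equiv.apply_symm_apply] at this
    exact sameBlock_symm e1
  · refine Prod.ext ?_ ?_
    · show (τ.1 * g) * g⁻¹ = τ.1
      rw [mul_assoc, mul_inv_cancel, mul_one]
    · show (fun q => σ'.2 (g⁻¹ q)) = τ.2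
      funext q
      show τ.2 (g (g⁻¹ q)) = τ.2 q
      rw [Equiv.Perm.coe_inv, Equiv.apply_symm_apply]
/-- Permutations preserving the fibers of `f` are a product of fiber permutations. -/
def fiberEquiv {α β : Type*} (f : α → β) :
    {g : Equiv.Perm α // ∀ x, f (g x) = f x} ≃ ∀ b : β, Equiv.Perm {x // f x = b} where
  toFun g b := Equiv.Perm.subtypePerm g.1 (fun x => by
    constructor
    · intro hx; rw [← g.2 x]; exact hx
    · intro hx; rw [g.2 x]; exact hx)
  invFun u := ⟨(Equiv.sigmaFiberEquiv f).symm.trans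
      ((Equiv.sigmaCongrRight u).trans (Equiv.sigmaFiberEquiv f)),
    fun x => (u (f x) ⟨x, rfl⟩).2⟩
  left_inv g := by
    apply Subtype.ext
    apply Equiv.ext
    intro x
    rfl
  right_inv u := by
    funext b
    apply Equiv.ext
    rintro ⟨x, hx⟩
    apply Subtype.ext
    subst hx
    rfl

lemma filter_blockOf_eq {a : Fin k → Fin n} (p : Fin n) :
    Finset.univ.filter (fun q => blockOf a q = blockOf a p) = blockOf a p := by
  ext q
  simp only [Finset.mem_filter, Finset.mem_univ, true_and, mem_blockOf_iff]
  constructor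
  · intro h; exact sameBlock_of_blockOf_eq h.symm
  · intro h; exact (blockOf_eq_of_sameBlock (sameBlock_symm h))

lemma card_G {a : Fin k → Fin n} :
    (Finset.univ.filter (fun g : Equiv.Perm (Fin n) => ∀ p, SameBlock a p (g p))).card
      = ∏ b ∈ blocks a, Nat.factorial b.card := by
  have hiff : ∀ g : Equiv.Perm (Fin n),
      (∀ p, SameBlock a p (g p)) ↔ (∀ x, blockOf a (g x) = blockOf a x) := by
    intro g
    constructor
    · intro h x; exact (blockOf_eq_of_sameBlock (h x)).symm
    · intro h x; exact sameBlock_symm (sameBlock_of_blockOf_eq (h x))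
  have h1 : (Finset.univ.filter (fun g : Equiv.Perm (Fin n) => ∀ p, SameBlock a p (g p))).card
      = Fintype.card {g : Equiv.Perm (Fin n) // ∀ x, blockOf a (g x) = blockOf a x} := by
    rw [Fintype.card_subtype]
    congr 1
    apply Finset.filter_congr
    intro g _
    exact iff_iff_eq.mp (hiff g) ▸ Iff.rfl
  rw [h1, Fintype.card_congr (fiberEquiv (blockOf a)), Fintype.card_pi]
  have h2 : ∀ b : Finset (Fin n),
      Fintype.card (Equiv.Perm {x // blockOf a x = b})
        = (Finset.univ.filter (fun q => blockOf a q = b)).card.factorial := by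
    intro b
    rw [Fintype.card_perm, Fintype.card_subtype]
  calc ∏ b : Finset (Fin n), Fintype.card (Equiv.Perm {x // blockOf a x = b})
      = ∏ b : Finset (Fin n), (Finset.univ.filter (fun q => blockOf a q = b)).card.factorial := by
        exact Finset.prod_congr rfl (fun b _ => h2 b)
    _ = ∏ b ∈ blocks a, Nat.factorial b.card := by
        rw [← Finset.prod_subset (Finset.subset_univ (blocks a))]
        · apply Finset.prod_congr rfl
          intro b hb
          obtain ⟨p, _, rfl⟩ := Finset.mem_image.mp hb
          rw [filter_blockOf_eq]
        · intro b _ hb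
          have : Finset.univ.filter (fun q => blockOf a q = b) = ∅ := by
            rw [Finset.filter_eq_empty_iff]
            intro q _ hq
            exact hb (Finset.mem_image.mpr ⟨q, Finset.mem_univ q, hq⟩)
          rw [this]
          simp
lemma card_colorings (B : Finset (Fin n)) :
    (Finset.univ.filter (fun c : Fin n → ZMod r => ∀ q ∈ B, (c q).val ≠ 0)).card
      = (r - 1) ^ B.card * r ^ (n - B.card) := by
  have hzc : (Finset.univ.filter (fun v : ZMod r => v.val ≠ 0)).card = r - 1 := by
    have h1 : Finset.univ.filter (fun v : ZMod r => ¬ v.val ≠ 0) = {0} := by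
      ext v
      simp [ZMod.val_eq_zero]
    have h2 := Finset.card_filter_add_card_filter_not
      (s := (Finset.univ : Finset (ZMod r))) (p := fun v => v.val ≠ 0)
    rw [h1] at h2
    simp only [Finset.card_singleton, Finset.card_univ, ZMod.card] at h2
    omega
  have hset : Finset.univ.filter (fun c : Fin n → ZMod r => ∀ q ∈ B, (c q).val ≠ 0)
      = Fintype.piFinset (fun q : Fin n =>
          if q ∈ B then Finset.univ.filter (fun v : ZMod r => v.val ≠ 0) else Finset.univ) := by
    ext c
    simp only [Finset.mem_filter, Finset.mem_univ, true_and, Fintype.mem_piFinset]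
    constructor
    · intro h q
      by_cases hq : q ∈ B
      · rw [if_pos hq]
        simp only [Finset.mem_filter, Finset.mem_univ, true_and]
        exact h q hq
      · rw [if_neg hq]; exact Finset.mem_univ _
    · intro h q hq
      have := h q
      rw [if_pos hq] at this
      exact (Finset.mem_filter.mp this).2
  rw [hset, Fintype.card_piFinset]
  have : ∀ q : Fin n, (if q ∈ B then Finset.univ.filter (fun v : ZMod r => v.val ≠ 0)
      else (Finset.univ : Finset (ZMod r))).card = if q ∈ B then r - 1 else r := by
    intro q
    by_cases hq : q ∈ B
    · rw [if_pos hq, if_pos hq]; exact hzc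
    · rw [if_neg hq, if_neg hq]; simp [ZMod.card]
  rw [Finset.prod_congr rfl (fun q _ => this q), Finset.prod_ite, Finset.prod_const,
    Finset.prod_const]
  congr 1
  · congr 1
    rw [Finset.filter_univ_mem]
  · congr 1
    have : Finset.univ.filter (fun q : Fin n => ¬ q ∈ B) = Bᶜ := by
      ext q; simp
    rw [this, Finset.card_compl]
    simp

lemma card_F (hn : 0 < n) {a : Fin k → Fin n} :
    (Finset.univ.filter (fun σ : CP n r =>
        ∀ q ∈ blockOf a ⟨n - 1, Nat.sub_lt hn one_pos⟩, (σ.2 q).val ≠ 0)).card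
      = Nat.factorial n * ((r - 1) ^ (blockOf a ⟨n - 1, Nat.sub_lt hn one_pos⟩).card
          * r ^ (n - (blockOf a ⟨n - 1, Nat.sub_lt hn one_pos⟩).card)) := by
  set B := blockOf a ⟨n - 1, Nat.sub_lt hn one_pos⟩ with hB
  have hprod : Finset.univ.filter (fun σ : CP n r => ∀ q ∈ B, (σ.2 q).val ≠ 0)
      = (Finset.univ : Finset (Equiv.Perm (Fin n))) ×ˢ
        (Finset.univ.filter (fun c : Fin n → ZMod r => ∀ q ∈ B, (c q).val ≠ 0)) := by
    ext σ
    simp [Finset.mem_product]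
  rw [hprod, Finset.card_product, card_colorings]
  congr 1
  rw [Finset.card_univ, Fintype.card_perm, Fintype.card_fin]
lemma card_good_mul (hn : 0 < n) {a : Fin k → Fin n} (hmem : ∃ i, (a i : ℕ) + 1 = n) :
    (Finset.univ.filter (fun σ : CP n r => ∀ i, IsDescent σ (a i))).card
        * ∏ b ∈ blocks a, Nat.factorial b.card
      = Nat.factorial n * ((r - 1) ^ (blockOf a ⟨n - 1, Nat.sub_lt hn one_pos⟩).card
          * r ^ (n - (blockOf a ⟨n - 1, Nat.sub_lt hn one_pos⟩).card)) := by
  rw [← card_G, ← card_F hn, ← Finset.card_product]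
  apply Finset.card_bij (fun (x : CP n r × Equiv.Perm (Fin n)) _ => phi x.1 x.2)
  · rintro ⟨σ, g⟩ hx
    rw [Finset.mem_product] at hx
    have hσ : ∀ i, IsDescent σ (a i) := (Finset.mem_filter.mp hx.1).2
    have hg : ∀ p, SameBlock a p (g p) := (Finset.mem_filter.mp hx.2).2
    rw [Finset.mem_filter]
    refine ⟨Finset.mem_univ _, ?_⟩
    intro q hq
    show (σ.2 (g q)).val ≠ 0
    have hgq : g q ∈ blockOf a ⟨n - 1, Nat.sub_lt hn one_pos⟩ :=
      sameBlock_mem (sameBlock_trans (mem_blockOf_iff.mp hq) (hg q))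
    exact good_nonzero hn hmem hσ hgq
  · rintro ⟨σ, g⟩ hx ⟨σ', g'⟩ hx' he
    rw [Finset.mem_product] at hx hx'
    have h := phi_injective (Finset.mem_filter.mp hx.1).2 (Finset.mem_filter.mp hx'.1).2
      (Finset.mem_filter.mp hx.2).2 (Finset.mem_filter.mp hx'.2).2 he
    exact Prod.ext h.1 h.2
  · intro τ hτ
    have hτ' : ∀ q ∈ blockOf a ⟨n - 1, Nat.sub_lt hn one_pos⟩, (τ.2 q).val ≠ 0 :=
      (Finset.mem_filter.mp hτ).2
    obtain ⟨σ, g, hσ, hg, he⟩ := phi_surjective hn hmem hτ'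
    refine ⟨(σ, g), ?_, he⟩
    rw [Finset.mem_product]
    exact ⟨Finset.mem_filter.mpr ⟨Finset.mem_univ _, hσ⟩,
      Finset.mem_filter.mpr ⟨Finset.mem_univ _, hg⟩⟩

lemma prod_X_eq {a : Fin k → Fin n} (σ : CP n r) :
    ∏ i, X (a i) σ = if (∀ i, IsDescent σ (a i)) then (1 : ℚ) else 0 := by
  by_cases h : ∀ i, IsDescent σ (a i)
  · rw [if_pos h]
    exact Finset.prod_eq_one (fun i _ => if_pos (h i))
  · rw [if_neg h]
    push_neg at h
    obtain ⟨i, hi⟩ := h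
    exact Finset.prod_eq_zero (Finset.mem_univ i) (if_neg hi)

open ColoredPerm in
theorem expectation_descent_product_with_n (n r k : ℕ) [NeZero r] (hn : 0 < n)
    (a : Fin k → Fin n) (hmem : ∃ i, (a i : ℕ) + 1 = n) :
    E Finset.univ (fun σ : CP n r => ∏ i, X (a i) σ) =
      (((r : ℚ) - 1) / r) ^ (blockOf a ⟨n - 1, by omega⟩).card * blockProd a := by
  classical
  set B : Finset (Fin n) := blockOf a ⟨n - 1, by omega⟩ with hB
  set m : ℕ := B.card with hm
  have hmn : m ≤ n := by
    have := Finset.card_le_univ B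
    simpa using this
  set Gc : ℕ := (Finset.univ.filter (fun σ : CP n r => ∀ i, IsDescent σ (a i))).card with hGc
  set P : ℕ := ∏ b ∈ blocks a, Nat.factorial b.card with hP
  have hr1 : 1 ≤ r := Nat.one_le_iff_ne_zero.mpr (NeZero.ne r)
  have hkey : (Gc : ℚ) * (P : ℚ) = (Nat.factorial n : ℚ)
      * (((r : ℚ) - 1) ^ m * (r : ℚ) ^ (n - m)) := by
    have h := card_good_mul (r := r) hn hmem
    have hcast : ((Gc * P : ℕ) : ℚ)
        = ((Nat.factorial n * ((r - 1) ^ m * r ^ (n - m)) : ℕ) : ℚ) := by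
      rw [hGc, hP]
      exact_mod_cast congrArg (Nat.cast (R := ℚ)) h
    push_cast [Nat.cast_sub hr1] at hcast
    convert hcast using 2
  have hP0 : (P : ℚ) ≠ 0 := by
    have h1 : 0 < P := Finset.prod_pos (fun b _ => Nat.factorial_pos b.card)
    exact Nat.cast_ne_zero.mpr h1.ne'
  have hr0 : (r : ℚ) ≠ 0 := Nat.cast_ne_zero.mpr (NeZero.ne r)
  have hf0 : (Nat.factorial n : ℚ) ≠ 0 := Nat.cast_ne_zero.mpr (Nat.factorial_ne_zero n)
  have hbp : blockProd a = ((P : ℚ))⁻¹ := by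
    rw [blockProd, hP]
    push_cast
    rw [← Finset.prod_inv_distrib]
    apply Finset.prod_congr rfl
    intro b _
    rw [one_div]
  have hsum : ∑ σ : CP n r, ∏ i, X (a i) σ = (Gc : ℚ) := by
    rw [hGc, ← Finset.sum_boole]
    exact Finset.sum_congr rfl (fun σ _ => prod_X_eq σ)
  have hU : (((Finset.univ : Finset (CP n r))).card : ℚ)
      = (Nat.factorial n : ℚ) * (r : ℚ) ^ n := by
    rw [Finset.card_univ]
    have : Fintype.card (CP n r) = Nat.factorial n * r ^ n := by
      rw [Fintype.card_prod, Fintype.card_perm, Fintype.card_fin, Fintype.card_fun,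
        ZMod.card, Fintype.card_fin]
    rw [this]
    push_cast
    ring
  rw [E, hsum, hU, hbp]
  have hGcval : (Gc : ℚ) = (Nat.factorial n : ℚ)
      * (((r : ℚ) - 1) ^ m * (r : ℚ) ^ (n - m)) / (P : ℚ) := by
    field_simp at hkey ⊢
    linarith [hkey]
  rw [hGcval, div_pow]
  have hpow : (r : ℚ) ^ (n - m) * (r : ℚ) ^ m = (r : ℚ) ^ n := by
    rw [← pow_add]
    congr 1
    omega
  field_simp
  linear_combination (((r : ℚ) - 1) ^ m) * hpow
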